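/- Let q ≥ 2, χ* a Dirichlet character mod d with d | q. All zeros of F(s) = ∏_{p|q}(1 - χ*(p)p^{-s}) other than possibly s = 0 are simple. -/

import Mathlib

open Complex Finset

private lemma zero_factor_exp {d : ℕ} (χ : DirichletCharacter ℂ d) {p : ℕ}
    (hp : p.Prime) {s₀ : ℂ} (h1 : χ (p : ZMod d) * (p : ℂ) ^ (-s₀) = 1) :
    ∃ k : ℤ, (d.totient : ℂ) * (Complex.log p * (-s₀)) = k * (2 * Real.pi * I) := by
  have hχ : χ (p : ZMod d) ≠ 0 := by
    intro h; rw [h, zero_mul] at h1; exact one_ne_zero h1.symm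
  have hcop : p.Coprime d := by
    by_contra hc
    exact hχ (χ.map_nonunit (fun hu => hc ((ZMod.isUnit_iff_coprime p d).mp hu)))
  have hχm : χ (p : ZMod d) ^ d.totient = 1 := by
    rw [← map_pow, ← Nat.cast_pow,
      (ZMod.natCast_eq_natCast_iff _ _ _).mpr (Nat.ModEq.pow_totient hcop)]
    simp
  have hp0 : (p : ℂ) ≠ 0 := Nat.cast_ne_zero.mpr hp.pos.ne'
  have h2 : ((p : ℂ) ^ (-s₀)) ^ d.totient = 1 := by
    have := congrArg (· ^ d.totient) h1
    simp only [mul_pow, one_pow, hχm, one_mul] at this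
    exact this
  rw [Complex.cpow_def_of_ne_zero hp0, ← Complex.exp_nat_mul] at h2
  exact Complex.exp_eq_one_iff.mp h2

private lemma zero_factor_unique {d : ℕ} (hd : d ≠ 0) (χ : DirichletCharacter ℂ d) {p r : ℕ}
    (hp : p.Prime) (hr : r.Prime) {s₀ : ℂ} (hs₀ : s₀ ≠ 0)
    (h1 : χ (p : ZMod d) * (p : ℂ) ^ (-s₀) = 1)
    (h2 : χ (r : ZMod d) * (r : ℂ) ^ (-s₀) = 1) : p = r := by
  obtain ⟨k, hk⟩ := zero_factor_exp χ hp h1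
  obtain ⟨j, hj⟩ := zero_factor_exp χ hr h2
  have hT : (2 * (Real.pi : ℂ) * I) ≠ 0 :=
    mul_ne_zero (mul_ne_zero two_ne_zero (Complex.ofReal_ne_zero.mpr Real.pi_ne_zero))
      Complex.I_ne_zero
  have hm : (d.totient : ℂ) ≠ 0 := Nat.cast_ne_zero.mpr (Nat.totient_pos.mpr
    (Nat.pos_of_ne_zero hd)).ne'
  have hlogp : Real.log p ≠ 0 := (Real.log_pos (by exact_mod_cast hp.one_lt)).ne'
  have hlogr : Real.log r ≠ 0 := (Real.log_pos (by exact_mod_cast hr.one_lt)).ne'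
  have hLp : Complex.log p = (Real.log p : ℂ) := (Complex.natCast_log).symm
  have hLr : Complex.log r = (Real.log r : ℂ) := (Complex.natCast_log).symm
  have hLp0 : Complex.log (p : ℂ) ≠ 0 := by
    rw [hLp]; exact Complex.ofReal_ne_zero.mpr hlogp
  have hLr0 : Complex.log (r : ℂ) ≠ 0 := by
    rw [hLr]; exact Complex.ofReal_ne_zero.mpr hlogr
  have hk0 : k ≠ 0 := by
    rintro rfl
    simp only [Int.cast_zero, zero_mul] at hk
    rcases mul_eq_zero.mp hk with h | h
    · exact hm h
    · rcases mul_eq_zero.mp h with h' | h'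
      · exact hLp0 h'
      · exact hs₀ (neg_eq_zero.mp h')
  have hj0 : j ≠ 0 := by
    rintro rfl
    simp only [Int.cast_zero, zero_mul] at hj
    rcases mul_eq_zero.mp hj with h | h
    · exact hm h
    · rcases mul_eq_zero.mp h with h' | h'
      · exact hLr0 h'
      · exact hs₀ (neg_eq_zero.mp h')
  -- cross multiply
  have hcross : ((k : ℂ) * Complex.log r) * (2 * Real.pi * I)
      = ((j : ℂ) * Complex.log p) * (2 * Real.pi * I) := by
    have e1 : ((k : ℂ) * (2 * Real.pi * I)) * Complex.log r
        = ((j : ℂ) * (2 * Real.pi * I)) * Complex.log p := by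
      rw [← hk, ← hj]; ring
    linear_combination e1
  have hcc : (k : ℂ) * Complex.log r = (j : ℂ) * Complex.log p :=
    mul_right_cancel₀ hT hcross
  rw [hLp, hLr] at hcc
  have hre : (k : ℝ) * Real.log r = (j : ℝ) * Real.log p := by exact_mod_cast hcc
  have habs : (k.natAbs : ℝ) * Real.log r = (j.natAbs : ℝ) * Real.log p := by
    have h' : |(k : ℝ)| * |Real.log r| = |(j : ℝ)| * |Real.log p| := by
      rw [← abs_mul, ← abs_mul, hre]
    rwa [_root_.abs_of_nonneg (Real.log_natCast_nonneg r), _root_.abs_of_nonneg (Real.log_natCast_nonneg p),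
      ← Int.cast_abs, ← Int.cast_abs, ← Nat.cast_natAbs, ← Nat.cast_natAbs] at h'
  have hlogeq : Real.log ((r : ℝ) ^ k.natAbs) = Real.log ((p : ℝ) ^ j.natAbs) := by
    rw [Real.log_pow, Real.log_pow]; exact_mod_cast habs
  have hpowR : (r : ℝ) ^ k.natAbs = (p : ℝ) ^ j.natAbs := by
    have hr0 : (0 : ℝ) < (r : ℝ) := by exact_mod_cast hr.pos
    have hp0' : (0 : ℝ) < (p : ℝ) := by exact_mod_cast hp.pos
    have hrpos : (0 : ℝ) < (r : ℝ) ^ k.natAbs := by positivity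
    have hppos : (0 : ℝ) < (p : ℝ) ^ j.natAbs := by positivity
    calc (r : ℝ) ^ k.natAbs = Real.exp (Real.log ((r : ℝ) ^ k.natAbs)) :=
            (Real.exp_log hrpos).symm
      _ = Real.exp (Real.log ((p : ℝ) ^ j.natAbs)) := by rw [hlogeq]
      _ = (p : ℝ) ^ j.natAbs := Real.exp_log hppos
  have hpowN : r ^ k.natAbs = p ^ j.natAbs := by exact_mod_cast hpowR
  have hpdvd : p ∣ r ^ k.natAbs := by
    rw [hpowN]
    exact dvd_pow_self p (Int.natAbs_ne_zero.mpr hj0)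
  exact ((Nat.prime_dvd_prime_iff_eq hp hr).mp (hp.dvd_of_dvd_pow hpdvd))

private lemma analyticAt_order_eq_one {f : ℂ → ℂ} {s₀ : ℂ} (hf : AnalyticAt ℂ f s₀)
    (h0 : f s₀ = 0) (h1 : deriv f s₀ ≠ 0) : analyticOrderAt f s₀ = 1 := by
  have hnt : analyticOrderAt f s₀ ≠ ⊤ := by
    intro h
    have hev := analyticOrderAt_eq_top.mp h
    have : deriv f s₀ = deriv (fun _ : ℂ => (0 : ℂ)) s₀ :=
      Filter.EventuallyEq.deriv_eq hev
    rw [deriv_const] at this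
    exact h1 this
  obtain ⟨n, hn⟩ := WithTop.ne_top_iff_exists.mp hnt
  obtain ⟨g, hg, hg0, hfg⟩ := (hf.analyticOrderAt_eq_natCast (n := n)).mp hn.symm
  rw [← hn]
  norm_cast
  match n with
  | 0 =>
    exfalso
    have := hfg.self_of_nhds
    simp only [pow_zero, one_smul] at this
    exact hg0 (this ▸ h0)
  | 1 => rfl
  | (m + 2) =>
    exfalso
    apply h1
    have hde : deriv f s₀ = deriv (fun z => (z - s₀) ^ (m + 2) * g z) s₀ := by
      apply Filter.EventuallyEq.deriv_eq
      filter_upwards [hfg] with z hz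
      simpa [smul_eq_mul] using hz
    have hpow : HasDerivAt (fun z : ℂ => (z - s₀) ^ (m + 2))
        (((m + 2 : ℕ) : ℂ) * (s₀ - s₀) ^ (m + 1) * 1) s₀ := by
      simpa using (((hasDerivAt_id s₀).sub_const s₀).fun_pow (m + 2))
    have hmul := hpow.fun_mul (hg.differentiableAt.hasDerivAt)
    rw [hde, hmul.deriv]
    simp

theorem finite_euler_product_nonzero_zeros_simple (q d : ℕ) (hq : 2 ≤ q) (hdq : d ∣ q)
    (χ : DirichletCharacter ℂ d) (s₀ : ℂ) (hs₀ : s₀ ≠ 0)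
    (hzero : ∏ p ∈ q.primeFactors, (1 - χ (p : ZMod d) * (p : ℂ) ^ (-s₀)) = 0)
    (hF : AnalyticAt ℂ
      (fun z : ℂ => ∏ p ∈ q.primeFactors, (1 - χ (p : ZMod d) * (p : ℂ) ^ (-z))) s₀) :
    analyticOrderAt (fun z : ℂ => ∏ p ∈ q.primeFactors, (1 - χ (p : ZMod d) * (p : ℂ) ^ (-z))) s₀ = 1 := by
  have hd : d ≠ 0 := by rintro rfl; rw [zero_dvd_iff] at hdq; omega
  obtain ⟨p₀, hp₀mem, hp₀zero⟩ := Finset.prod_eq_zero_iff.mp hzero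
  have hp₀ : p₀.Prime := Nat.prime_of_mem_primeFactors hp₀mem
  have h1 : χ (p₀ : ZMod d) * (p₀ : ℂ) ^ (-s₀) = 1 := (sub_eq_zero.mp hp₀zero).symm
  have hlog₀ : Complex.log p₀ ≠ 0 := by
    rw [← Complex.natCast_log]
    exact Complex.ofReal_ne_zero.mpr (Real.log_pos (by exact_mod_cast hp₀.one_lt)).ne'
  set f' : ℕ → ℂ := fun p => χ (p : ZMod d) * (p : ℂ) ^ (-s₀) * Complex.log p with hf'
  have hder : ∀ p ∈ q.primeFactors,
      HasDerivAt (fun z : ℂ => 1 - χ (p : ZMod d) * (p : ℂ) ^ (-z)) (f' p) s₀ := by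
    intro p hpmem
    have hpne : (p : ℂ) ≠ 0 :=
      Nat.cast_ne_zero.mpr (Nat.prime_of_mem_primeFactors hpmem).pos.ne'
    have h := (((hasDerivAt_id s₀).neg.const_cpow (Or.inl hpne)).const_mul
      (χ (p : ZMod d))).const_sub 1
    refine h.congr_deriv ?_
    simp only [hf', id_eq, Pi.neg_apply]
    ring
  have hFd := HasDerivAt.fun_finsetProd hder
  have huniq : ∀ p ∈ q.primeFactors, 1 - χ (p : ZMod d) * (p : ℂ) ^ (-s₀) = 0 → p = p₀ := by
    intro p hpmem hz
    exact zero_factor_unique hd χ (Nat.prime_of_mem_primeFactors hpmem) hp₀ hs₀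
      (sub_eq_zero.mp hz).symm h1
  have hprodne : (∏ j ∈ q.primeFactors.erase p₀,
      (1 - χ (j : ZMod d) * (j : ℂ) ^ (-s₀))) ≠ 0 := by
    rw [Finset.prod_ne_zero_iff]
    intro j hj hzj
    obtain ⟨hjne, hjmem⟩ := Finset.mem_erase.mp hj
    exact hjne (huniq j hjmem hzj)
  have hsum : (∑ p ∈ q.primeFactors,
        (∏ j ∈ q.primeFactors.erase p, (1 - χ (j : ZMod d) * (j : ℂ) ^ (-s₀))) • f' p)
      = (∏ j ∈ q.primeFactors.erase p₀, (1 - χ (j : ZMod d) * (j : ℂ) ^ (-s₀))) * f' p₀ := by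
    rw [Finset.sum_eq_single p₀]
    · rw [smul_eq_mul]
    · intro p hpmem hpne
      rw [Finset.prod_eq_zero (Finset.mem_erase.mpr ⟨fun h => hpne h.symm, hp₀mem⟩) hp₀zero,
        zero_smul]
    · intro h; exact absurd hp₀mem h
  have hf'ne : f' p₀ ≠ 0 := by
    simp only [hf', h1, one_mul]
    exact hlog₀
  have hderiv_ne : deriv (fun z : ℂ =>
      ∏ p ∈ q.primeFactors, (1 - χ (p : ZMod d) * (p : ℂ) ^ (-z))) s₀ ≠ 0 := by
    have := hFd.deriv
    rw [hsum] at this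
    rw [this]
    exact mul_ne_zero hprodne hf'ne
  exact analyticAt_order_eq_one hF hzero hderiv_ne
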